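/- If x is an increasing sequence (r_n) is chosen with r_{-1} = 0 and r_n the least number r > r_{n-1} such that r ∈ F_n \ ⋃_{i<n} F_i, where F ⊆ ℕ describes an almost disjoint family of infinite columns, then such r_n exists for every n, the set R = {r_0, r_1, …} is infinite, and R ∩ F_n ⊆ {r_0, …, r_n} is finite for every n; moreover if F is computable then R is computable. -/

import Mathlib

/-- The `n`-th column of a set of naturals. -/
def column (F : Set ℕ) (n : ℕ) : Set ℕ := {x | Nat.pair x n ∈ F}

/-- Bounded test: `m` avoids all columns `i < n` (w.r.t. indicator `f`). -/
private def adB (f : ℕ → Bool) (m n : ℕ) : Bool :=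
  Nat.rec true (fun i IH => IH && !f (Nat.pair m i)) n

/-- Search predicate for the diagonalization step. -/
private def adQ (f : ℕ → Bool) (a : ℕ × ℕ) (m : ℕ) : Bool :=
  decide (a.2 < m) && (f (Nat.pair m a.1) && adB f m a.1)

open Classical in
/-- Least `m` with `adQ f a m`, or `0` if none. -/
private noncomputable def adStep (f : ℕ → Bool) (a : ℕ × ℕ) : ℕ :=
  if h : ∃ m, adQ f a m = true then Nat.find h else 0

/-- The diagonal sequence computed from the indicator `f`. -/
private noncomputable def adR (f : ℕ → Bool) (n : ℕ) : ℕ :=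
  Nat.rec (adStep f (0, 0)) (fun k prev => adStep f (k + 1, prev)) n

/-- Bounded range-membership test. -/
private def adG (g : ℕ → ℕ) (x k : ℕ) : Bool :=
  Nat.rec false (fun n IH => IH || decide (g n = x)) k

private lemma adB_comp {f : ℕ → Bool} (hf : Computable f) :
    Computable fun p : (ℕ × ℕ) × ℕ => adB f p.2 p.1.1 := by
  have hh : Computable₂ fun (p : (ℕ × ℕ) × ℕ) (y : ℕ × Bool) =>
      (y.2 && !f (Nat.pair p.2 y.1)) := by
    have hnotf : Computable fun z : ((ℕ × ℕ) × ℕ) × ℕ × Bool =>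
        !f (Nat.pair z.1.2 z.2.1) :=
      Primrec.not.to_comp.comp
        (hf.comp ((Primrec₂.natPair.comp (Primrec.snd.comp Primrec.fst)
          (Primrec.fst.comp Primrec.snd)).to_comp))
    exact Primrec.and.to_comp.comp (Computable.snd.comp Computable.snd) hnotf
  have := Computable.nat_rec (f := fun p : (ℕ × ℕ) × ℕ => p.1.1)
    (Computable.fst.comp Computable.fst) (Computable.const true) hh
  exact this.of_eq fun p => rfl

private lemma adQ_comp {f : ℕ → Bool} (hf : Computable f) : Computable₂ (adQ f) := by
  have h1 : Computable fun p : (ℕ × ℕ) × ℕ => decide (p.1.2 < p.2) :=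
    (Primrec.nat_lt.comp (Primrec.snd.comp Primrec.fst) Primrec.snd).decide.to_comp
  have h2 : Computable fun p : (ℕ × ℕ) × ℕ => f (Nat.pair p.2 p.1.1) :=
    hf.comp
      (Primrec₂.natPair.comp Primrec.snd (Primrec.fst.comp Primrec.fst)).to_comp
  exact Primrec.and.to_comp.comp h1 (Primrec.and.to_comp.comp h2 (adB_comp hf))

private lemma adStep_comp {f : ℕ → Bool} (hf : Computable f)
    (htot : ∀ a : ℕ × ℕ, ∃ m, adQ f a m = true) : Computable (adStep f) := by
  classical
  have hpr : Partrec fun a : ℕ × ℕ => Nat.rfind fun m => Part.some (adQ f a m) :=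
    Partrec.rfind (adQ_comp hf).partrec₂
  apply hpr.of_eq_tot
  intro a
  refine Nat.mem_rfind.2 ?_
  have hstep : adStep f a = Nat.find (htot a) := by
    rw [adStep, dif_pos (htot a)]
  constructor
  · rw [hstep]; simpa using Nat.find_spec (htot a)
  · intro m hm
    rw [hstep] at hm
    have := Nat.find_min (htot a) hm
    simpa [Bool.not_eq_true] using this

private lemma adR_comp {f : ℕ → Bool} (hf : Computable f)
    (htot : ∀ a : ℕ × ℕ, ∃ m, adQ f a m = true) : Computable (adR f) := by
  have hh : Computable₂ fun (_ : ℕ) (y : ℕ × ℕ) => adStep f (y.1 + 1, y.2) :=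
    (adStep_comp hf htot).comp
      ((Computable.succ.comp (Computable.fst.comp Computable.snd)).pair
        (Computable.snd.comp Computable.snd))
  have := Computable.nat_rec Computable.id (Computable.const (adStep f (0, 0))) hh
  exact this.of_eq fun n => rfl

private lemma adG_comp {g : ℕ → ℕ} (hg : Computable g) :
    Computable fun x => adG g x (x + 1) := by
  have hh : Computable₂ fun (x : ℕ) (y : ℕ × Bool) => (y.2 || decide (g y.1 = x)) := by
    have hd : Computable fun z : ℕ × ℕ × Bool => decide (g z.2.1 = z.1) :=
      Primrec.eq.decide.to_comp.comp (hg.comp (Computable.fst.comp Computable.snd))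
        Computable.fst
    exact Primrec.or.to_comp.comp (Computable.snd.comp Computable.snd) hd
  have := Computable.nat_rec Computable.succ (Computable.const false) hh
  exact this.of_eq fun x => rfl

/-- Diagonalization against an almost disjoint family: there is a sequence `r` where
`r n` is the least number greater than the previous value lying in
`F_n \ ⋃_{i<n} F_i`; its range `R` is infinite, meets each `F_n` only within
`{r 0, …, r n}`, hence finitely, and `R` is computable whenever `F` is. -/
theorem AD_diagonalization (F : Set ℕ)
    (hinf : ∀ n, (column F n).Infinite)
    (had : ∀ n k, n ≠ k → (column F n ∩ column F k).Finite) :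
    ∃ r : ℕ → ℕ,
      (∀ n, ((if n = 0 then 0 else r (n - 1)) < r n ∧
              r n ∈ column F n ∧ (∀ i < n, r n ∉ column F i)) ∧
        ∀ m, ((if n = 0 then 0 else r (n - 1)) < m ∧
              m ∈ column F n ∧ (∀ i < n, m ∉ column F i)) → r n ≤ m) ∧
      (Set.range r).Infinite ∧
      (∀ n, Set.range r ∩ column F n ⊆ r '' Set.Iic n) ∧
      (∀ n, (Set.range r ∩ column F n).Finite) ∧
      (ComputablePred (· ∈ F) → ComputablePred (· ∈ Set.range r)) := by
  classical
  -- existence of suitable next values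
  have hex : ∀ n prev : ℕ, ∃ m, prev < m ∧ m ∈ column F n ∧ ∀ i < n, m ∉ column F i := by
    intro n prev
    have hfin : (⋃ i ∈ Finset.range n, column F n ∩ column F i).Finite := by
      apply Set.Finite.biUnion (Finset.range n).finite_toSet
      intro i hi
      exact had n i (by simp at hi; omega)
    have hinf' : (column F n \ (⋃ i ∈ Finset.range n, column F n ∩ column F i)).Infinite :=
      (hinf n).diff hfin
    obtain ⟨m, hm, hmlt⟩ := hinf'.exists_gt prev
    refine ⟨m, hmlt, hm.1, fun i hi hmem => hm.2 ?_⟩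
    exact Set.mem_biUnion (Finset.mem_range.2 hi) ⟨hm.1, hmem⟩
  -- the sequence
  let step : ℕ → ℕ → ℕ := fun n prev => Nat.find (hex n prev)
  let r : ℕ → ℕ := fun n => Nat.rec (step 0 0) (fun k prev => step (k + 1) prev) n
  have hrS : ∀ n, r (n + 1) = step (n + 1) (r n) := fun n => rfl
  have hprev : ∀ n, r n = step n (if n = 0 then 0 else r (n - 1)) := by
    intro n
    cases n with
    | zero => rfl
    | succ k => simp [hrS k]
  have hspec : ∀ n, ((if n = 0 then 0 else r (n - 1)) < r n ∧
      r n ∈ column F n ∧ (∀ i < n, r n ∉ column F i)) ∧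
      ∀ m, ((if n = 0 then 0 else r (n - 1)) < m ∧
        m ∈ column F n ∧ (∀ i < n, m ∉ column F i)) → r n ≤ m := by
    intro n
    rw [hprev n]
    exact ⟨Nat.find_spec (hex n _), fun m hm => Nat.find_min' (hex n _) hm⟩
  have hmono : StrictMono r := by
    apply strictMono_nat_of_lt_succ
    intro n
    have := (hspec (n + 1)).1.1
    simpa using this
  have hsub : ∀ n, Set.range r ∩ column F n ⊆ r '' Set.Iic n := by
    rintro n x ⟨⟨m, rfl⟩, hxF⟩
    refine ⟨m, ?_, rfl⟩
    by_contra h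
    exact (hspec m).1.2.2 n (by simpa using h) hxF
  refine ⟨r, hspec, Set.infinite_range_of_injective hmono.injective, hsub,
    fun n => ((Set.finite_Iic n).image r).subset (hsub n), ?_⟩
  -- computability
  intro hF
  obtain ⟨f, hfc, hfe⟩ := ComputablePred.computable_iff.1 hF
  have hmem : ∀ x, x ∈ F ↔ f x = true := fun x => iff_of_eq (congrFun hfe x)
  have hB : ∀ m n, adB f m n = true ↔ ∀ i < n, m ∉ column F i := by
    intro m n
    induction n with
    | zero => simp [adB]
    | succ k ih =>
      show (adB f m k && !f (Nat.pair m k)) = true ↔ _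
      rw [Bool.and_eq_true, ih]
      constructor
      · rintro ⟨h1, h2⟩ i hi
        rcases Nat.lt_succ_iff_lt_or_eq.1 hi with h | rfl
        · exact h1 i h
        · simp only [Bool.not_eq_true'] at h2
          simp [column, hmem, h2]
      · intro h
        refine ⟨fun i hi => h i (Nat.lt_succ_of_lt hi), ?_⟩
        have := h k (Nat.lt_succ_self k)
        simp only [column, Set.mem_setOf_eq, hmem] at this
        simpa using this
  have hq : ∀ n prev m, adQ f (n, prev) m = true ↔
      (prev < m ∧ m ∈ column F n ∧ ∀ i < n, m ∉ column F i) := by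
    intro n prev m
    rw [adQ, Bool.and_eq_true, Bool.and_eq_true, decide_eq_true_eq, hB,
      show (f (Nat.pair m n) = true) ↔ m ∈ column F n from (hmem _).symm]
  have htot : ∀ a : ℕ × ℕ, ∃ m, adQ f a m = true := by
    rintro ⟨n, prev⟩
    obtain ⟨m, hm⟩ := hex n prev
    exact ⟨m, (hq n prev m).2 hm⟩
  -- adStep computes step
  have hstep : ∀ n prev, adStep f (n, prev) = step n prev := by
    intro n prev
    have h1 : adStep f (n, prev) = Nat.find (htot (n, prev)) := by
      rw [adStep, dif_pos (htot (n, prev))]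
    rw [h1]
    apply le_antisymm
    · exact Nat.find_min' _ ((hq n prev _).2 (Nat.find_spec (hex n prev)))
    · exact Nat.find_min' _ ((hq n prev _).1 (Nat.find_spec (htot (n, prev))))
  have hr'r : ∀ n, adR f n = r n := by
    intro n
    induction n with
    | zero => exact hstep 0 0
    | succ k ih =>
      show adStep f (k + 1, adR f k) = r (k + 1)
      rw [ih, hrS k]
      exact hstep _ _
  have hrange : ∀ x, x ∈ Set.range r ↔ ∃ n, n ≤ x ∧ adR f n = x := by
    intro x
    constructor
    · rintro ⟨n, rfl⟩
      exact ⟨n, hmono.le_apply, hr'r n⟩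
    · rintro ⟨n, _, h⟩
      exact ⟨n, (hr'r n).symm.trans h⟩
  have hG : ∀ x k, adG (adR f) x k = true ↔ ∃ n, n < k ∧ adR f n = x := by
    intro x k
    induction k with
    | zero => simp [adG]
    | succ j ih =>
      show (adG (adR f) x j || decide (adR f j = x)) = true ↔ _
      rw [Bool.or_eq_true, ih]
      constructor
      · rintro (⟨n, hn, h⟩ | h)
        · exact ⟨n, Nat.lt_succ_of_lt hn, h⟩
        · exact ⟨j, Nat.lt_succ_self j, of_decide_eq_true h⟩
      · rintro ⟨n, hn, h⟩
        rcases Nat.lt_succ_iff_lt_or_eq.1 hn with h' | rfl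
        · exact Or.inl ⟨n, h', h⟩
        · exact Or.inr (decide_eq_true h)
  apply ComputablePred.computable_iff.2
  refine ⟨fun x => adG (adR f) x (x + 1), adG_comp (adR_comp hfc htot),
    funext fun x => propext ?_⟩
  rw [hrange x, hG x (x + 1)]
  constructor
  · rintro ⟨n, hn, h⟩; exact ⟨n, Nat.lt_succ_of_le hn, h⟩
  · rintro ⟨n, hn, h⟩; exact ⟨n, Nat.lt_succ_iff.1 hn, h⟩
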